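/- arXiv:math/9904120 — 2 statements merged into one kernel-verified Lean document; each statement's English description precedes it below -/
import Mathlib

section
/- Let λ_1,…,λ_n > 0 and for each i let Q_i := ∏_{j : n_j > 0} δ_{ij}·Δ(n_j) ⊂ ℝ^n be the cartesian product over the blocks of the scaled standard simplices. Then the Lebesgue volume of the Minkowski sum λ_1 Q_1 + ⋯ + λ_n Q_n equals (∏_{j : n_j > 0} (Σ_{i=1}^n λ_i δ_{ij})^{n_j}) / (n_1!⋯n_k!). (The computation underlying Proposition 6.1, identifying the BKK bound of a multihomogeneous system with a permanent.) -/
open MeasureTheory Pointwise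


lemma volume_simplex : ∀ (m : ℕ) (c : ℝ), 0 ≤ c →
    volume {x : Fin m → ℝ | (∀ h, 0 ≤ x h) ∧ ∑ h, x h ≤ c} =
      ENNReal.ofReal (c ^ m / m.factorial) := by
  intro m
  induction m with
  | zero =>
    intro c hc
    have : {x : Fin 0 → ℝ | (∀ h, 0 ≤ x h) ∧ ∑ h, x h ≤ c} = Set.univ := by
      ext x; simp [hc]
    rw [this, ← Set.pi_univ Set.univ, volume_pi_pi]
    simp
  | succ m ih =>
    intro c hc
    set e := MeasurableEquiv.piFinSuccAbove (fun _ : Fin (m + 1) => ℝ) 0 with he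
    set A : Set (ℝ × (Fin m → ℝ)) :=
      {p | (0 ≤ p.1 ∧ ∀ h, 0 ≤ p.2 h) ∧ p.1 + ∑ h, p.2 h ≤ c} with hA
    have hAeq : A = ({p : ℝ × (Fin m → ℝ) | 0 ≤ p.1} ∩ ⋂ h, {p : ℝ × (Fin m → ℝ) | 0 ≤ p.2 h})
        ∩ {p : ℝ × (Fin m → ℝ) | p.1 + ∑ h, p.2 h ≤ c} := by
      ext p; simp [hA, Set.mem_iInter, and_assoc]
    have hAmeas : MeasurableSet A := by
      rw [hAeq]
      refine MeasurableSet.inter (MeasurableSet.inter ?_ ?_) ?_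
      · exact measurableSet_le measurable_const measurable_fst
      · exact MeasurableSet.iInter fun h =>
          measurableSet_le measurable_const (measurable_snd.eval)
      · exact measurableSet_le (measurable_fst.add
          (Finset.measurable_sum _ fun h _ => measurable_snd.eval))
          measurable_const
    have hpre : {x : Fin (m+1) → ℝ | (∀ h, 0 ≤ x h) ∧ ∑ h, x h ≤ c} = e ⁻¹' A := by
      ext x
      simp only [Set.mem_preimage, hA, Set.mem_setOf_eq, he,
        MeasurableEquiv.piFinSuccAbove, MeasurableEquiv.coe_mk, Equiv.coe_fn_mk]
      rw [Fin.sum_univ_succAbove (fun h => x h) 0, Fin.forall_iff_succAbove 0]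
      simp [Fin.insertNthEquiv, Fin.tail]
    rw [hpre, (volume_preserving_piFinSuccAbove (fun _ : Fin (m+1) => ℝ) 0).measure_preimage
      hAmeas.nullMeasurableSet]
    have : (volume : Measure (ℝ × (Fin m → ℝ))) A =
        ∫⁻ t : ℝ, volume {y : Fin m → ℝ | (t, y) ∈ A} := by
      rw [Measure.volume_eq_prod, Measure.prod_apply hAmeas]; rfl
    rw [this]
    have hslice : ∀ t : ℝ, volume {y : Fin m → ℝ | (t, y) ∈ A} =
        Set.indicator (Set.Icc 0 c) (fun t => ENNReal.ofReal ((c - t) ^ m / m.factorial)) t := by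
      intro t
      by_cases ht : t ∈ Set.Icc (0:ℝ) c
      · rw [Set.indicator_of_mem ht]
        have : {y : Fin m → ℝ | (t, y) ∈ A} =
            {y : Fin m → ℝ | (∀ h, 0 ≤ y h) ∧ ∑ h, y h ≤ c - t} := by
          ext y
          simp only [hA, Set.mem_setOf_eq]
          constructor
          · rintro ⟨⟨-, h2⟩, h3⟩; exact ⟨h2, by linarith⟩
          · rintro ⟨h2, h3⟩; exact ⟨⟨ht.1, h2⟩, by linarith⟩
        rw [this, ih _ (by linarith [ht.2])]
      · rw [Set.indicator_of_notMem ht]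
        have : {y : Fin m → ℝ | (t, y) ∈ A} = ∅ := by
          ext y
          simp only [hA, Set.mem_setOf_eq, Set.mem_empty_iff_false, iff_false, not_and]
          rintro ⟨h1, h2⟩ h3
          have hs : 0 ≤ ∑ h, y h := Finset.sum_nonneg fun h _ => h2 h
          exact ht ⟨h1, by linarith⟩
        simp [this]
    simp_rw [hslice]
    rw [lintegral_indicator measurableSet_Icc]
    have hcont : Continuous fun t : ℝ => (c - t) ^ m / m.factorial :=
      (((continuous_const.sub continuous_id).pow m).div_const _)
    rw [← ofReal_integral_eq_lintegral_ofReal (hcont.integrableOn_Icc)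
      ((ae_restrict_iff' measurableSet_Icc).2 (Filter.Eventually.of_forall fun t ht =>
        div_nonneg (pow_nonneg (by linarith [ht.2]) m) (Nat.cast_nonneg _)))]
    congr 1
    rw [MeasureTheory.integral_Icc_eq_integral_Ioc, ← intervalIntegral.integral_of_le hc,
      intervalIntegral.integral_div,
      intervalIntegral.integral_comp_sub_left (fun s : ℝ => s ^ m) c]
    simp only [sub_self, sub_zero]
    rw [integral_pow, Nat.factorial_succ, zero_pow (by omega), sub_zero, div_div]
    congr 1
    push_cast
    ring

/-- The Minkowski sum of the scaled "block simplex" sets is the block simplex set for the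
summed bounds. -/
lemma sum_smul_block_simplex (k : ℕ) (n : Fin k → ℕ) {N : ℕ}
    (δ : Fin N → Fin k → ℕ) (lam : Fin N → ℝ) (hlam : ∀ i, 0 < lam i) :
    (∑ i, lam i • {z : (j : Fin k) → Fin (n j) → ℝ |
        ∀ j, (∀ h, 0 ≤ z j h) ∧ (∑ h, z j h) ≤ (δ i j : ℝ)}) =
      {z : (j : Fin k) → Fin (n j) → ℝ |
        ∀ j, (∀ h, 0 ≤ z j h) ∧ (∑ h, z j h) ≤ ∑ i, lam i * (δ i j : ℝ)} := by
  have hsmul : ∀ i, lam i • {z : (j : Fin k) → Fin (n j) → ℝ |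
      ∀ j, (∀ h, 0 ≤ z j h) ∧ (∑ h, z j h) ≤ (δ i j : ℝ)} =
      {z : (j : Fin k) → Fin (n j) → ℝ |
        ∀ j, (∀ h, 0 ≤ z j h) ∧ (∑ h, z j h) ≤ lam i * (δ i j : ℝ)} := by
    intro i
    ext z
    rw [Set.mem_smul_set_iff_inv_smul_mem₀ (hlam i).ne']
    simp only [Set.mem_setOf_eq, Pi.smul_apply, smul_eq_mul]
    have hinv : 0 < (lam i)⁻¹ := inv_pos.2 (hlam i)
    constructor
    · intro H j
      obtain ⟨H1, H2⟩ := H j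
      refine ⟨fun h => ?_, ?_⟩
      · have := H1 h; nlinarith [hlam i]
      · rw [← Finset.mul_sum] at H2
        rw [← mul_le_mul_iff_right₀ hinv]
        calc (lam i)⁻¹ * ∑ h, z j h ≤ (δ i j : ℝ) := H2
          _ = (lam i)⁻¹ * (lam i * (δ i j : ℝ)) := by
              rw [inv_mul_cancel_left₀ (hlam i).ne']
    · intro H j
      obtain ⟨H1, H2⟩ := H j
      refine ⟨fun h => mul_nonneg hinv.le (H1 h), ?_⟩
      rw [← Finset.mul_sum]
      calc (lam i)⁻¹ * ∑ h, z j h ≤ (lam i)⁻¹ * (lam i * (δ i j : ℝ)) :=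
            mul_le_mul_of_nonneg_left H2 hinv.le
        _ = (δ i j : ℝ) := by rw [inv_mul_cancel_left₀ (hlam i).ne']
  simp_rw [hsmul]
  ext z
  rw [Set.mem_fintype_sum]
  constructor
  · rintro ⟨g, hg, rfl⟩
    intro j
    constructor
    · intro h
      rw [Finset.sum_apply, Finset.sum_apply]
      exact Finset.sum_nonneg fun i _ => (hg i j).1 h
    · simp only [Finset.sum_apply]
      rw [Finset.sum_comm]
      exact Finset.sum_le_sum fun i _ => (hg i j).2
  · intro hz
    set C : Fin k → ℝ := fun j => ∑ i, lam i * (δ i j : ℝ) with hC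
    have hCnn : ∀ j, 0 ≤ C j :=
      fun j => Finset.sum_nonneg fun i _ => mul_nonneg (hlam i).le (Nat.cast_nonneg _)
    refine ⟨fun i j h => (lam i * (δ i j : ℝ) / C j) * z j h, fun i => ?_, ?_⟩
    · intro j
      have hnum : 0 ≤ lam i * (δ i j : ℝ) := mul_nonneg (hlam i).le (Nat.cast_nonneg _)
      refine ⟨fun h => mul_nonneg (div_nonneg hnum (hCnn j)) ((hz j).1 h), ?_⟩
      rw [← Finset.mul_sum]
      rcases eq_or_lt_of_le (hCnn j) with hC0 | hC0
      · rw [← hC0, div_zero, zero_mul]; exact hnum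
      · calc lam i * (δ i j : ℝ) / C j * ∑ h, z j h
            ≤ lam i * (δ i j : ℝ) / C j * C j :=
              mul_le_mul_of_nonneg_left (hz j).2 (div_nonneg hnum (hCnn j))
          _ = lam i * (δ i j : ℝ) := by field_simp
    · funext j
      funext h
      simp only [Finset.sum_apply]
      rw [← Finset.sum_mul]
      rw [← Finset.sum_div]
      rcases eq_or_lt_of_le (hCnn j) with hC0 | hC0
      · have hz0 : z j h = 0 := by
          have h1 : z j h ≤ ∑ h', z j h' :=
            Finset.single_le_sum (fun h' _ => (hz j).1 h') (Finset.mem_univ h)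
          have h2 : ∑ h', z j h' ≤ C j := (hz j).2
          have := (hz j).1 h
          rw [← hC0] at h2
          linarith
        rw [hz0, mul_zero]
      · rw [div_self hC0.ne', one_mul]

/-- **The computation underlying Proposition 6.1**: for `λ_1, …, λ_n > 0` and
`Q_i = ∏_{j : n_j > 0} δ_{ij} Δ(n_j)` (the product over the blocks of the scaled standard
simplices), the Lebesgue volume of the Minkowski sum `λ_1 Q_1 + ⋯ + λ_n Q_n` is
`(∏_j (∑_i λ_i δ_{ij})^{n_j}) / (n_1! ⋯ n_k!)`. -/
theorem volume_minkowski_sum_scaled_simplex_products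
    (k : ℕ) (hk : 0 < k) (n : Fin k → ℕ) (hn : 1 ≤ ∑ j, n j)
    (δ : Fin (∑ j, n j) → Fin k → ℕ)
    (lam : Fin (∑ j, n j) → ℝ) (hlam : ∀ i, 0 < lam i) :
    volume (∑ i, lam i •
        {z : (j : Fin k) → Fin (n j) → ℝ |
          ∀ j, (∀ h, 0 ≤ z j h) ∧ (∑ h, z j h) ≤ (δ i j : ℝ)}) =
      ENNReal.ofReal
        ((∏ j, (∑ i, lam i * (δ i j : ℝ)) ^ (n j)) / ∏ j, (Nat.factorial (n j) : ℝ)) := by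
  rw [sum_smul_block_simplex k n δ lam hlam]
  set C : Fin k → ℝ := fun j => ∑ i, lam i * (δ i j : ℝ) with hC
  have hCnn : ∀ j, 0 ≤ C j :=
    fun j => Finset.sum_nonneg fun i _ => mul_nonneg (hlam i).le (Nat.cast_nonneg _)
  have hpi : {z : (j : Fin k) → Fin (n j) → ℝ |
      ∀ j, (∀ h, 0 ≤ z j h) ∧ (∑ h, z j h) ≤ C j} =
      Set.pi Set.univ (fun j => {y : Fin (n j) → ℝ | (∀ h, 0 ≤ y h) ∧ ∑ h, y h ≤ C j}) := by
    ext z; simp [Set.mem_pi]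
  rw [hpi, volume_pi_pi]
  have : ∀ j, volume {y : Fin (n j) → ℝ | (∀ h, 0 ≤ y h) ∧ ∑ h, y h ≤ C j} =
      ENNReal.ofReal (C j ^ (n j) / (n j).factorial) :=
    fun j => volume_simplex (n j) (C j) (hCnn j)
  simp_rw [this]
  rw [← ENNReal.ofReal_prod_of_nonneg (fun j _ => div_nonneg (pow_nonneg (hCnn j) _) (Nat.cast_nonneg _))]
  congr 1
  rw [Finset.prod_div_distrib]
end

section
/- The inner product ⟨f, f'⟩_i := Σ_{a∈A_i} η(a) f_a f'_a on ℋ_i is invariant under the action of G = O(n_1+1)×⋯×O(n_k+1) and makes the monomials pairwise orthogonal; moreover it is the unique such inner product up to multiplication by a positive scalar: any inner product on ℋ_i that is G-invariant and with respect to which the monomials x^a (a ∈ A_i) are pairwise orthogonal is a positive scalar multiple of ⟨·,·⟩_i. (Lemma 3.1.) -/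
namespace MH

variable {k : ℕ}

/-- The set of exponent vectors `A_i`: for each block `j` a tuple of exponents on the
variables `y_{j0}, …, y_{j n_j}` summing to the degree `d j`. -/
def ExpVec (n d : Fin k → ℕ) : Type _ :=
  { a : (j : Fin k) → Fin (n j + 1) → Fin (d j + 1) // ∀ j, ∑ h, ((a j h : ℕ)) = d j }

noncomputable instance (n d : Fin k → ℕ) : Fintype (ExpVec n d) := by
  unfold ExpVec; infer_instance

instance (n d : Fin k → ℕ) : DecidableEq (ExpVec n d) := by
  unfold ExpVec; infer_instance

/-- `η(a) = ∏_j (a_{j0}! ⋯ a_{j n_j}!) / (a_{j0} + ⋯ + a_{j n_j})!`. -/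
noncomputable def etaR (n d : Fin k → ℕ) (a : ExpVec n d) : ℝ :=
  ∏ j, (∏ h, (Nat.factorial (a.1 j h) : ℝ)) / (Nat.factorial (d j) : ℝ)

/-- Evaluation of the polynomial with coefficient vector `c` at `x = (y_1, …, y_k)`. -/
noncomputable def evalPoly (n d : Fin k → ℕ) (c : ExpVec n d → ℝ)
    (x : (j : Fin k) → Fin (n j + 1) → ℝ) : ℝ :=
  ∑ a : ExpVec n d, c a * ∏ j, ∏ h, (x j h) ^ ((a.1 j h : ℕ))

/-- The inner product `⟨f, f'⟩_i = ∑_{a ∈ A_i} η(a) f_a f'_a` on the coefficient space. -/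
noncomputable def innerH (n d : Fin k → ℕ) (c c' : ExpVec n d → ℝ) : ℝ :=
  ∑ a : ExpVec n d, etaR n d a * c a * c' a

/-- The blockwise action of `O ∈ G = O(n_1+1) × ⋯ × O(n_k+1)` on the point
`x = (y_1, …, y_k)`, i.e. `x ↦ Ox`. -/
noncomputable def actPt (n : Fin k → ℕ)
    (O : (j : Fin k) → Matrix.orthogonalGroup (Fin (n j + 1)) ℝ)
    (x : (j : Fin k) → Fin (n j + 1) → ℝ) : (j : Fin k) → Fin (n j + 1) → ℝ :=
  fun j => ((O j : Matrix (Fin (n j + 1)) (Fin (n j + 1)) ℝ)).mulVec (x j)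

/-- `cO` is the coefficient vector of the polynomial `O·f = f ∘ O⁻¹`, where `c` is the
coefficient vector of `f`; this characterizes the action of `G` on `ℋ_i`. -/
def IsActed (n d : Fin k → ℕ)
    (O : (j : Fin k) → Matrix.orthogonalGroup (Fin (n j + 1)) ℝ)
    (c cO : ExpVec n d → ℝ) : Prop :=
  ∀ x : (j : Fin k) → Fin (n j + 1) → ℝ,
    evalPoly n d cO x = evalPoly n d c (actPt n (fun j => (O j)⁻¹) x)

end MH

namespace MH
open Finset

lemma eval_monomials_inj {ι σ : Type*} [Fintype ι] [DecidableEq ι] [Fintype σ] [DecidableEq σ]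
    (e : ι → σ → ℕ) (he : Function.Injective e) (C C' : ι → ℝ)
    (h : ∀ y : σ → ℝ, ∑ i, C i * ∏ s, y s ^ e i s = ∑ i, C' i * ∏ s, y s ^ e i s) :
    C = C' := by
  have key : ∀ (D : ι → ℝ) (y : σ → ℝ),
      MvPolynomial.eval y
        (∑ i, MvPolynomial.monomial (Finsupp.equivFunOnFinite.symm (e i)) (D i))
      = ∑ i, D i * ∏ s, y s ^ e i s := by
    intro D y
    rw [map_sum]
    refine Finset.sum_congr rfl fun i _ => ?_
    rw [MvPolynomial.eval_monomial]
    congr 1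
    rw [Finsupp.prod_fintype]
    · rfl
    · intro s; exact pow_zero _
  have hpq : (∑ i, MvPolynomial.monomial (Finsupp.equivFunOnFinite.symm (e i)) (C i))
      = ∑ i, MvPolynomial.monomial (Finsupp.equivFunOnFinite.symm (e i)) (C' i) :=
    MvPolynomial.funext fun y => by rw [key, key]; exact h y
  funext i
  have hinj : Function.Injective (fun i => Finsupp.equivFunOnFinite.symm (e i)) :=
    Finsupp.equivFunOnFinite.symm.injective.comp he
  have h1 := congrArg (MvPolynomial.coeff (Finsupp.equivFunOnFinite.symm (e i))) hpq
  rw [MvPolynomial.coeff_sum, MvPolynomial.coeff_sum] at h1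
  have h2 : ∀ (D : ι → ℝ),
      (∑ i', MvPolynomial.coeff (Finsupp.equivFunOnFinite.symm (e i))
        (MvPolynomial.monomial (Finsupp.equivFunOnFinite.symm (e i')) (D i'))) = D i := by
    intro D
    rw [Finset.sum_eq_single i]
    · simp [MvPolynomial.coeff_monomial]
    · intro b _ hb
      rw [MvPolynomial.coeff_monomial, if_neg (fun hc => hb (hinj hc))]
    · intro hi; exact absurd (Finset.mem_univ i) hi
  rw [h2, h2] at h1
  exact h1
end MH

namespace MH
open Finset

variable {k : ℕ} (n d : Fin k → ℕ)

/-- flattened exponent function -/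
def expFlat (a : ExpVec n d) : (Σ j : Fin k, Fin (n j + 1)) → ℕ := fun s => (a.1 s.1 s.2 : ℕ)

lemma expFlat_injective : Function.Injective (expFlat n d) := by
  intro a b hab
  apply Subtype.ext
  funext j h
  exact Fin.ext (congrFun hab ⟨j, h⟩)

lemma evalPoly_sigma (c : ExpVec n d → ℝ) (x : (j : Fin k) → Fin (n j + 1) → ℝ) :
    evalPoly n d c x
      = ∑ a : ExpVec n d, c a * ∏ s : (Σ j : Fin k, Fin (n j + 1)), x s.1 s.2 ^ expFlat n d a s := by
  refine Finset.sum_congr rfl fun a _ => ?_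
  rw [← Finset.univ_sigma_univ, Finset.prod_sigma]
  rfl

lemma evalPoly_injective {c c' : ExpVec n d → ℝ}
    (h : ∀ x, evalPoly n d c x = evalPoly n d c' x) : c = c' := by
  refine eval_monomials_inj (expFlat n d) (expFlat_injective n d) c c' fun y => ?_
  have := h (fun j h => y ⟨j, h⟩)
  rw [evalPoly_sigma, evalPoly_sigma] at this
  exact this

end MH

namespace MH
open Finset

variable {k : ℕ} (n d : Fin k → ℕ)

/-- multinomial coefficient of an exponent vector -/
noncomputable def mFac (a : ExpVec n d) : ℕ :=
  ∏ j, Nat.multinomial Finset.univ (fun h => (a.1 j h : ℕ))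

lemma etaR_mul_mFac (a : ExpVec n d) : etaR n d a * (mFac n d a : ℝ) = 1 := by
  rw [etaR, mFac, Nat.cast_prod, ← Finset.prod_mul_distrib]
  refine Finset.prod_eq_one fun j _ => ?_
  have hs := Nat.multinomial_spec Finset.univ (fun h => (a.1 j h : ℕ))
  rw [a.2 j] at hs
  have hd : (0:ℝ) < (Nat.factorial (d j) : ℝ) := by positivity
  rw [div_mul_eq_mul_div, div_eq_one_iff_eq (ne_of_gt hd)]
  push_cast [← hs]
  ring

lemma etaR_pos (a : ExpVec n d) : 0 < etaR n d a := by
  rw [etaR]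
  refine Finset.prod_pos fun j _ => ?_
  positivity

lemma mFac_cast_pos (a : ExpVec n d) : (0:ℝ) < (mFac n d a : ℝ) := by
  have h := etaR_mul_mFac n d a
  rcases (Nat.cast_nonneg (α := ℝ) (mFac n d a)).lt_or_eq with h1 | h1
  · exact h1
  · rw [← h1, mul_zero] at h; exact absurd h zero_ne_one

/-- coefficients of the kernel polynomial `x ↦ ∏_j ⟨v_j, x_j⟩^{d_j}` -/
noncomputable def cker (v : (j : Fin k) → Fin (n j + 1) → ℝ) : ExpVec n d → ℝ :=
  fun a => (mFac n d a : ℝ) * ∏ j, ∏ h, (v j h) ^ ((a.1 j h : ℕ))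

/-- the distinguished exponent vector `(d_j, 0, …, 0)` -/
def aStar : ExpVec n d := ⟨fun j h => if h = 0 then Fin.last (d j) else 0, fun j => by
  have hco : ∀ h : Fin (n j + 1),
      (((if h = 0 then Fin.last (d j) else 0 : Fin (d j + 1))) : ℕ) = if h = 0 then d j else 0 := by
    intro h; split <;> simp [Fin.last]
  rw [Finset.sum_congr rfl fun h _ => hco h, Finset.sum_ite_eq' Finset.univ 0 (fun _ => d j)]
  simp⟩

/-- multinomial theorem -/
lemma evalPoly_cker (v x : (j : Fin k) → Fin (n j + 1) → ℝ) :
    evalPoly n d (cker n d v) x = ∏ j, (∑ h, v j h * x j h) ^ d j := by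
  have step : ∀ j, (∑ h, v j h * x j h) ^ d j
      = ∑ kj ∈ Finset.piAntidiag (Finset.univ : Finset (Fin (n j + 1))) (d j),
          (Nat.multinomial Finset.univ kj : ℝ) * ∏ h, (v j h * x j h) ^ kj h :=
    fun j => Finset.sum_pow_eq_sum_piAntidiag _ _ _
  rw [Finset.prod_congr rfl fun j _ => step j, Finset.prod_univ_sum]
  rw [evalPoly]
  have hbnd : ∀ (κ : (j : Fin k) → Fin (n j + 1) → ℕ) (j : Fin k) (h : Fin (n j + 1)),
      min (κ j h) (d j) < d j + 1 := fun κ j h => by omega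
  have hval : ∀ (κ : (j : Fin k) → Fin (n j + 1) → ℕ),
      κ ∈ Fintype.piFinset (fun j => Finset.piAntidiag (Finset.univ : Finset (Fin (n j + 1))) (d j)) →
      ∀ j h, min (κ j h) (d j) = κ j h := by
    intro κ hκ j h
    have hj := (Fintype.mem_piFinset.mp hκ) j
    have hsum := (Finset.mem_piAntidiag.mp hj).1
    have : κ j h ≤ d j := by
      rw [← hsum]; exact Finset.single_le_sum (fun _ _ => Nat.zero_le _) (Finset.mem_univ h)
    omega
  refine Finset.sum_nbij' (fun a => fun j h => (a.1 j h : ℕ))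
    (fun κ => if hκ : κ ∈ Fintype.piFinset
        (fun j => Finset.piAntidiag (Finset.univ : Finset (Fin (n j + 1))) (d j)) then
      ⟨fun j h => ⟨min (κ j h) (d j), hbnd κ j h⟩, fun j => by
        have hj := (Fintype.mem_piFinset.mp hκ) j
        have hsum := (Finset.mem_piAntidiag.mp hj).1
        calc ∑ h, ((⟨min (κ j h) (d j), hbnd κ j h⟩ : Fin (d j + 1)) : ℕ)
            = ∑ h, κ j h := Finset.sum_congr rfl fun h _ => hval κ hκ j h
          _ = d j := hsum⟩
    else aStar n d) ?_ ?_ ?_ ?_ ?_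
  · intro a _
    rw [Fintype.mem_piFinset]
    intro j
    rw [Finset.mem_piAntidiag]
    exact ⟨a.2 j, fun h _ => Finset.mem_univ h⟩
  · intro κ hκ; exact Finset.mem_univ _
  · intro a _
    have hmem : (fun j h => (a.1 j h : ℕ)) ∈ Fintype.piFinset
        (fun j => Finset.piAntidiag (Finset.univ : Finset (Fin (n j + 1))) (d j)) := by
      rw [Fintype.mem_piFinset]
      intro j
      rw [Finset.mem_piAntidiag]
      exact ⟨a.2 j, fun h _ => Finset.mem_univ h⟩
    simp only [dif_pos hmem]
    erw [dif_pos hmem]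
    apply Subtype.ext; funext j h
    apply Fin.ext
    have : (a.1 j h : ℕ) ≤ d j :=
      le_of_le_of_eq (Finset.single_le_sum (f := fun h' => ((a.1 j h' : ℕ)))
        (fun _ _ => Nat.zero_le _) (Finset.mem_univ h)) (a.2 j)
    simpa using Nat.min_eq_left this
  · intro κ hκ
    erw [dif_pos hκ]
    funext j h
    exact hval κ hκ j h
  · intro a _
    rw [cker, mFac]
    push_cast
    simp only [mul_pow, Finset.prod_mul_distrib]
    ring

end MH

namespace MH
open Finset

variable {k : ℕ} (n d : Fin k → ℕ)

/-- reproducing property -/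
lemma innerH_cker (c : ExpVec n d → ℝ) (v : (j : Fin k) → Fin (n j + 1) → ℝ) :
    innerH n d c (cker n d v) = evalPoly n d c v := by
  rw [innerH, evalPoly]
  refine Finset.sum_congr rfl fun a _ => ?_
  rw [cker]
  have h := etaR_mul_mFac n d a
  calc etaR n d a * c a * ((mFac n d a : ℝ) * ∏ j, ∏ h, v j h ^ ((a.1 j h : ℕ)))
      = (etaR n d a * (mFac n d a : ℝ)) * (c a * ∏ j, ∏ h, v j h ^ ((a.1 j h : ℕ))) := by ring
    _ = c a * ∏ j, ∏ h, v j h ^ ((a.1 j h : ℕ)) := by rw [h, one_mul]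

lemma evalPoly_sum_smul {N : ℕ} (lam : Fin N → ℝ) (cs : Fin N → ExpVec n d → ℝ)
    (x : (j : Fin k) → Fin (n j + 1) → ℝ) :
    evalPoly n d (∑ i, lam i • cs i) x = ∑ i, lam i * evalPoly n d (cs i) x := by
  simp only [evalPoly, Finset.sum_apply, Pi.smul_apply, smul_eq_mul, Finset.sum_mul,
    Finset.mul_sum]
  rw [Finset.sum_comm]
  exact Finset.sum_congr rfl fun a _ => Finset.sum_congr rfl fun i _ => by ring

lemma innerH_sum_smul {N : ℕ} (c : ExpVec n d → ℝ) (lam : Fin N → ℝ)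
    (cs : Fin N → ExpVec n d → ℝ) :
    innerH n d c (∑ i, lam i • cs i) = ∑ i, lam i * innerH n d c (cs i) := by
  simp only [innerH, Finset.sum_apply, Pi.smul_apply, smul_eq_mul, Finset.sum_mul,
    Finset.mul_sum]
  rw [Finset.sum_comm]
  exact Finset.sum_congr rfl fun a _ => Finset.sum_congr rfl fun i _ => by ring

lemma pi_single_sum (c : ExpVec n d → ℝ) :
    c = ∑ a, c a • (Pi.single a 1 : ExpVec n d → ℝ) := by
  funext b
  rw [Finset.sum_apply]
  simp only [Pi.smul_apply, Pi.single_apply, smul_eq_mul, mul_ite, mul_one, mul_zero]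
  rw [Finset.sum_ite_eq Finset.univ b c]
  simp

lemma evalPoly_zero (x : (j : Fin k) → Fin (n j + 1) → ℝ) : evalPoly n d 0 x = 0 := by
  simp [evalPoly]

/-- the kernels span everything -/
lemma span_cker_top : Submodule.span ℝ (Set.range (cker n d)) = ⊤ := by
  by_contra hne
  obtain ⟨f, hf0, hf⟩ := Submodule.exists_dual_map_eq_bot_of_lt_top
    (lt_top_iff_ne_top.2 hne) inferInstance
  have hker : ∀ v, f (cker n d v) = 0 := by
    intro v
    have hmem : f (cker n d v) ∈ Submodule.map f (Submodule.span ℝ (Set.range (cker n d))) :=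
      ⟨_, Submodule.subset_span ⟨v, rfl⟩, rfl⟩
    rw [hf] at hmem
    simpa using hmem
  set μ : ExpVec n d → ℝ := fun a => f (Pi.single a 1) with hμ
  have hfc : ∀ c : ExpVec n d → ℝ, f c = ∑ a, c a * μ a := by
    intro c
    conv_lhs => rw [pi_single_sum n d c]
    rw [map_sum]
    exact Finset.sum_congr rfl fun a _ => by rw [map_smul]; rfl
  have h0 : ∀ v, evalPoly n d (fun a => μ a * (mFac n d a : ℝ)) v = 0 := by
    intro v
    rw [← hker v, hfc, evalPoly]
    refine Finset.sum_congr rfl fun a _ => ?_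
    rw [cker]
    ring
  have hμ0 : (fun a => μ a * (mFac n d a : ℝ)) = (0 : ExpVec n d → ℝ) :=
    evalPoly_injective n d fun x => by rw [h0 x, evalPoly_zero]
  have : ∀ a, μ a = 0 := by
    intro a
    have := congrFun hμ0 a
    simp only [Pi.zero_apply] at this
    exact (mul_eq_zero.mp this).resolve_right (ne_of_gt (mFac_cast_pos n d a))
  apply hf0
  apply LinearMap.ext
  intro c
  rw [hfc]
  simp [this]

end MH

namespace MH
open Finset

variable {k : ℕ} (n d : Fin k → ℕ)

lemma dot_inv {m : ℕ} (O : Matrix.orthogonalGroup (Fin m) ℝ) (v x : Fin m → ℝ) :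
    ∑ h, v h * ((O⁻¹ : Matrix.orthogonalGroup (Fin m) ℝ) : Matrix (Fin m) (Fin m) ℝ).mulVec x h
      = ∑ h, ((O : Matrix (Fin m) (Fin m) ℝ).mulVec v) h * x h := by
  have hstar : ((O⁻¹ : Matrix.orthogonalGroup (Fin m) ℝ) : Matrix (Fin m) (Fin m) ℝ)
      = Matrix.transpose ((O : Matrix (Fin m) (Fin m) ℝ)) := by
    rw [Matrix.UnitaryGroup.inv_val]
    ext i j
    exact star_trivial _
  show dotProduct v _ = dotProduct _ x
  rw [hstar, Matrix.dotProduct_mulVec, Matrix.vecMul_transpose]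

lemma actPt_inv_act (O : (j : Fin k) → Matrix.orthogonalGroup (Fin (n j + 1)) ℝ)
    (v : (j : Fin k) → Fin (n j + 1) → ℝ) :
    actPt n (fun j => (O j)⁻¹) (actPt n O v) = v := by
  funext j
  show ((O j)⁻¹ : Matrix.orthogonalGroup (Fin (n j + 1)) ℝ).1.mulVec
    (((O j) : Matrix.orthogonalGroup (Fin (n j + 1)) ℝ).1.mulVec (v j)) = v j
  rw [Matrix.mulVec_mulVec]
  have h2 : ((O j)⁻¹ : Matrix.orthogonalGroup (Fin (n j + 1)) ℝ).1
      * (O j : Matrix.orthogonalGroup (Fin (n j + 1)) ℝ).1 = 1 := by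
    calc ((O j)⁻¹ : Matrix.orthogonalGroup (Fin (n j + 1)) ℝ).1
        * (O j : Matrix.orthogonalGroup (Fin (n j + 1)) ℝ).1
        = (((O j)⁻¹ * O j : Matrix.orthogonalGroup (Fin (n j + 1)) ℝ)).1 := rfl
      _ = ((1 : Matrix.orthogonalGroup (Fin (n j + 1)) ℝ)).1 := by rw [inv_mul_cancel (O j)]
      _ = 1 := rfl
  rw [h2, Matrix.one_mulVec]

lemma isActed_cker (O : (j : Fin k) → Matrix.orthogonalGroup (Fin (n j + 1)) ℝ)
    (v : (j : Fin k) → Fin (n j + 1) → ℝ) :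
    IsActed n d O (cker n d v) (cker n d (actPt n O v)) := by
  intro x
  rw [evalPoly_cker, evalPoly_cker]
  refine Finset.prod_congr rfl fun j _ => ?_
  congr 1
  exact (dot_inv (O j) (v j) (x j)).symm

/-- Part 1: invariance of innerH -/
lemma innerH_invariant (O : (j : Fin k) → Matrix.orthogonalGroup (Fin (n j + 1)) ℝ)
    (c c' cO cO' : ExpVec n d → ℝ)
    (h : IsActed n d O c cO) (h' : IsActed n d O c' cO') :
    innerH n d cO cO' = innerH n d c c' := by
  have hc' : c' ∈ Submodule.span ℝ (Set.range (cker n d)) := by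
    rw [span_cker_top]; trivial
  obtain ⟨N, lam, g, hsum⟩ := Submodule.mem_span_set'.mp hc'
  choose v hv using fun i => (g i).2
  have hc'2 : c' = ∑ i, lam i • cker n d (v i) := by
    rw [← hsum]
    exact Finset.sum_congr rfl fun i _ => by rw [hv i]
  have hcO' : cO' = ∑ i, lam i • cker n d (actPt n O (v i)) := by
    apply evalPoly_injective n d
    intro x
    rw [h' x, hc'2, evalPoly_sum_smul, evalPoly_sum_smul]
    exact Finset.sum_congr rfl fun i _ => by rw [← isActed_cker n d O (v i) x]
  rw [hcO', innerH_sum_smul, hc'2, innerH_sum_smul]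
  refine Finset.sum_congr rfl fun i _ => ?_
  rw [innerH_cker, innerH_cker, h (actPt n O (v i)), actPt_inv_act]

/-- Part 2: orthogonality of monomials -/
lemma innerH_single_orth {a a' : ExpVec n d} (hne : a ≠ a') :
    innerH n d (Pi.single a 1) (Pi.single a' 1) = 0 := by
  rw [innerH]
  refine Finset.sum_eq_zero fun b _ => ?_
  by_cases hba : b = a
  · subst hba
    rw [Pi.single_eq_of_ne hne 1, mul_zero]
  · rw [Pi.single_eq_of_ne hba 1, mul_zero, zero_mul]

end MH

namespace MH
open Finset

lemma vecMulVec_mul_vecMulVec {m : ℕ} (u : Fin m → ℝ) :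
    Matrix.vecMulVec u u * Matrix.vecMulVec u u = (∑ l, u l ^ 2) • Matrix.vecMulVec u u := by
  ext i j
  simp only [Matrix.mul_apply, Matrix.vecMulVec_apply, Matrix.smul_apply, smul_eq_mul,
    Finset.sum_mul, Finset.mul_sum]
  exact Finset.sum_congr rfl fun l _ => by ring

lemma vecMulVec_mulVec {m : ℕ} (u x : Fin m → ℝ) :
    (Matrix.vecMulVec u u).mulVec x = (∑ l, u l * x l) • u := by
  funext i
  simp only [Matrix.mulVec, dotProduct, Matrix.vecMulVec_apply, Pi.smul_apply,
    smul_eq_mul, Finset.sum_mul, Finset.mul_sum]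
  exact Finset.sum_congr rfl fun l _ => by ring

lemma exists_householder (m : ℕ) (v : Fin (m + 1) → ℝ) :
    ∃ O : Matrix.orthogonalGroup (Fin (m + 1)) ℝ,
      (O : Matrix (Fin (m + 1)) (Fin (m + 1)) ℝ).mulVec v
        = Pi.single 0 (Real.sqrt (∑ h, v h ^ 2)) := by
  classical
  set r := Real.sqrt (∑ h, v h ^ 2) with hrdef
  set w : Fin (m + 1) → ℝ := Pi.single 0 r with hwdef
  by_cases hvw : v = w
  · exact ⟨1, by rw [Matrix.UnitaryGroup.one_val, Matrix.one_mulVec, hvw]⟩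
  have hr2 : r ^ 2 = ∑ h, v h ^ 2 := Real.sq_sqrt (by positivity)
  set u : Fin (m + 1) → ℝ := v - w with hudef
  set s := ∑ l, u l ^ 2 with hsdef
  have hWW : ∑ h, w h ^ 2 = r ^ 2 := by
    simp only [hwdef, Pi.single_apply]
    rw [Finset.sum_congr rfl (fun h _ => by rw [ite_pow, zero_pow (two_ne_zero)]),
      Finset.sum_ite_eq' Finset.univ 0 (fun _ => r ^ 2)]
    simp
  have hWV : ∑ h, w h * v h = r * v 0 := by
    simp only [hwdef, Pi.single_apply, ite_mul, zero_mul]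
    rw [Finset.sum_ite_eq' Finset.univ 0 (fun h => r * v h)]
    simp
  have hVV : ∑ l, v l * v l = r ^ 2 := by
    rw [hr2]; exact Finset.sum_congr rfl fun l _ => by ring
  have hUV : ∑ l, u l * v l = r ^ 2 - r * v 0 := by
    simp only [hudef, Pi.sub_apply, sub_mul]
    rw [Finset.sum_sub_distrib, hVV, hWV]
  have hS : s = 2 * (r ^ 2 - r * v 0) := by
    simp only [hsdef, hudef, Pi.sub_apply]
    rw [Finset.sum_congr rfl (fun l _ => by ring :
      ∀ l ∈ Finset.univ, (v l - w l) ^ 2 = v l ^ 2 - 2 * (w l * v l) + w l ^ 2)]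
    rw [Finset.sum_add_distrib, Finset.sum_sub_distrib, hWW, ← Finset.mul_sum, hWV, ← hr2]
    ring
  have hs0 : s ≠ 0 := by
    intro h0
    apply hvw
    have huz : ∀ l, u l = 0 := by
      intro l
      have hnn : ∀ l ∈ Finset.univ, (0:ℝ) ≤ u l ^ 2 := fun l _ => sq_nonneg _
      have h2 := (Finset.sum_eq_zero_iff_of_nonneg hnn).mp (hsdef.symm.trans h0) l
        (Finset.mem_univ l)
      exact pow_eq_zero_iff two_ne_zero |>.mp h2
    funext l
    have := huz l
    simp only [hudef, Pi.sub_apply] at this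
    linarith
  set c := 2 / s with hcdef
  set M : Matrix (Fin (m + 1)) (Fin (m + 1)) ℝ := 1 - c • Matrix.vecMulVec u u with hMdef
  have hstar : star M = M := by
    ext i j
    have h1 : star M i j = M j i := star_trivial (M j i)
    rw [h1, hMdef]
    simp only [Matrix.sub_apply, Matrix.smul_apply, Matrix.one_apply, Matrix.vecMulVec_apply,
      smul_eq_mul]
    by_cases hij : i = j
    · subst hij; ring
    · rw [if_neg hij, if_neg (Ne.symm hij)]; ring
  have hMM : M * M = 1 := by
    rw [hMdef]
    simp only [sub_mul, mul_sub, one_mul, mul_one, Matrix.smul_mul, Matrix.mul_smul, smul_smul]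
    rw [vecMulVec_mul_vecMulVec, smul_smul, ← hsdef]
    have hcc : c * c * s = c + c := by
      rw [hcdef]; field_simp; ring
    rw [hcc]
    have : (c + c) • Matrix.vecMulVec u u
        = c • Matrix.vecMulVec u u + c • Matrix.vecMulVec u u := add_smul c c _
    rw [this]
    abel
  have hmem : M ∈ Matrix.orthogonalGroup (Fin (m + 1)) ℝ := by
    have hT : M.transpose = star M := by
      ext i j; exact (star_trivial (M j i)).symm
    rw [Matrix.mem_orthogonalGroup_iff, hT, hstar, hMM]
  refine ⟨⟨M, hmem⟩, ?_⟩
  show M.mulVec v = w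
  rw [hMdef, Matrix.sub_mulVec, Matrix.one_mulVec, Matrix.smul_mulVec, vecMulVec_mulVec,
    hUV, smul_smul]
  have hc1 : c * (r ^ 2 - r * v 0) = 1 := by
    rw [hcdef]
    have : r ^ 2 - r * v 0 = s / 2 := by rw [hS]; ring
    rw [this]
    field_simp
  rw [hc1, one_smul, hudef]
  funext l
  simp

end MH

namespace MH
open Finset

variable {k : ℕ} (n d : Fin k → ℕ)

lemma aStar_coe (j : Fin k) (h : Fin (n j + 1)) :
    (((aStar n d).1 j h : ℕ)) = if h = 0 then d j else 0 := by
  show (((if h = 0 then Fin.last (d j) else 0 : Fin (d j + 1))) : ℕ) = _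
  split <;> simp [Fin.last]

lemma etaR_aStar : etaR n d (aStar n d) = 1 := by
  rw [etaR]
  refine Finset.prod_eq_one fun j _ => ?_
  have hfac : ∀ h : Fin (n j + 1), (Nat.factorial ((aStar n d).1 j h : ℕ) : ℝ)
      = if h = 0 then (Nat.factorial (d j) : ℝ) else 1 := by
    intro h
    rw [aStar_coe]
    split <;> simp
  rw [Finset.prod_congr rfl fun h _ => hfac h,
    Finset.prod_ite_eq' Finset.univ 0 (fun _ => (Nat.factorial (d j) : ℝ))]
  have : (0 : Fin (n j + 1)) ∈ Finset.univ := Finset.mem_univ _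
  rw [if_pos this, div_self]
  positivity

lemma mFac_aStar : (mFac n d (aStar n d) : ℝ) = 1 := by
  have h := etaR_mul_mFac n d (aStar n d)
  rw [etaR_aStar, one_mul] at h
  exact h

lemma cker_pointmass (r : Fin k → ℝ) :
    cker n d (fun j => Pi.single 0 (r j))
      = (∏ j, r j ^ d j) • (Pi.single (aStar n d) 1 : ExpVec n d → ℝ) := by
  funext a
  by_cases ha : a = aStar n d
  · subst ha
    rw [cker, mFac_aStar, one_mul]
    have hfac : ∀ j, ∀ h : Fin (n j + 1),
        ((Pi.single 0 (r j) : Fin (n j + 1) → ℝ) h) ^ (((aStar n d).1 j h : ℕ))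
        = if h = 0 then r j ^ d j else 1 := by
      intro j h
      rw [aStar_coe]
      by_cases h0 : h = 0
      · subst h0; simp
      · rw [if_neg h0, if_neg h0, Pi.single_eq_of_ne h0, pow_zero]
    have : ∀ j, (∏ h, ((Pi.single 0 (r j) : Fin (n j + 1) → ℝ) h) ^ (((aStar n d).1 j h : ℕ)))
        = r j ^ d j := by
      intro j
      rw [Finset.prod_congr rfl fun h _ => hfac j h,
        Finset.prod_ite_eq' Finset.univ 0 (fun _ => r j ^ d j)]
      simp
    rw [Finset.prod_congr rfl fun j _ => this j]
    simp [Pi.single_eq_same]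
  · have hra : ∃ j, ∃ h, h ≠ 0 ∧ ((a.1 j h : ℕ)) ≠ 0 := by
      by_contra hcon
      push_neg at hcon
      apply ha
      apply Subtype.ext
      funext j h
      apply Fin.ext
      show ((a.1 j h : ℕ)) = (((aStar n d).1 j h : ℕ))
      rw [aStar_coe]
      by_cases h0 : h = 0
      · subst h0
        rw [if_pos rfl]
        have hsum : ∑ h', ((a.1 j h' : ℕ)) = ((a.1 j 0 : ℕ)) := by
          rw [Finset.sum_eq_single 0]
          · intro b _ hb; exact hcon j b hb
          · intro hb; exact absurd (Finset.mem_univ _) hb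
        exact hsum.symm.trans (a.2 j)
      · rw [if_neg h0]; exact hcon j h h0
    obtain ⟨j, h, hh0, hne0⟩ := hra
    have hz : (∏ h', ((Pi.single 0 (r j) : Fin (n j + 1) → ℝ) h') ^ ((a.1 j h' : ℕ))) = 0 := by
      apply Finset.prod_eq_zero (Finset.mem_univ h)
      rw [Pi.single_eq_of_ne hh0, zero_pow hne0]
    rw [cker, Finset.prod_eq_zero (Finset.mem_univ j) hz, mul_zero]
    rw [Pi.smul_apply, Pi.single_eq_of_ne ha, smul_zero]

end MH

namespace MH
open Finset

variable {k : ℕ} (n d : Fin k → ℕ)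

lemma single_ne_zero' (a : ExpVec n d) : (Pi.single a 1 : ExpVec n d → ℝ) ≠ 0 := by
  intro h
  have := congrFun h a
  rw [Pi.single_eq_same] at this
  exact one_ne_zero this

lemma uniqueness (B : (ExpVec n d → ℝ) →ₗ[ℝ] (ExpVec n d → ℝ) →ₗ[ℝ] ℝ)
    (hpos : ∀ c, c ≠ 0 → 0 < B c c)
    (horth : ∀ a a' : ExpVec n d, a ≠ a' → B (Pi.single a 1) (Pi.single a' 1) = 0)
    (hinv : ∀ (O : (j : Fin k) → Matrix.orthogonalGroup (Fin (n j + 1)) ℝ)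
        (c c' cO cO' : ExpVec n d → ℝ),
      IsActed n d O c cO → IsActed n d O c' cO' → B cO cO' = B c c') :
    ∃ t : ℝ, 0 < t ∧ ∀ c c', B c c' = t * innerH n d c c' := by
  classical
  set b : ExpVec n d → ℝ := fun a => B (Pi.single a 1) (Pi.single a 1) with hbdef
  have hBexp : ∀ c c' : ExpVec n d → ℝ, B c c' = ∑ a, c a * c' a * b a := by
    intro c c'
    conv_lhs => rw [pi_single_sum n d c', map_sum]
    have e1 : ∀ a', (B c) (c' a' • (Pi.single a' 1 : ExpVec n d → ℝ))
        = c' a' * (B c) (Pi.single a' 1) := fun a' => by rw [map_smul, smul_eq_mul]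
    rw [Finset.sum_congr rfl fun a' _ => e1 a']
    have e2 : ∀ a', (B c) (Pi.single a' 1) = c a' * b a' := by
      intro a'
      conv_lhs => rw [pi_single_sum n d c]
      rw [map_sum, LinearMap.sum_apply, Finset.sum_eq_single a']
      · rw [map_smul, LinearMap.smul_apply, smul_eq_mul]
      · intro a _ ha
        rw [map_smul, LinearMap.smul_apply, smul_eq_mul, horth a a' ha, mul_zero]
      · intro h; exact absurd (Finset.mem_univ a') h
    rw [Finset.sum_congr rfl fun a' _ => by rw [e2 a']]
    exact Finset.sum_congr rfl fun a _ => by ring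
  set t := b (aStar n d) with htdef
  have ht : 0 < t := hpos _ (single_ne_zero' n d _)
  have hkey : ∀ v, B (cker n d v) (cker n d v) = t * evalPoly n d (cker n d v) v := by
    intro v
    choose O hO using fun j => exists_householder (n j) (v j)
    have hact : actPt n O v
        = fun j => (Pi.single 0 (Real.sqrt (∑ h, v j h ^ 2)) : Fin (n j + 1) → ℝ) := by
      funext j; exact hO j
    have hself := hinv O (cker n d v) (cker n d v)
      (cker n d (actPt n O v)) (cker n d (actPt n O v))
      (isActed_cker n d O v) (isActed_cker n d O v)
    rw [← hself, hact, cker_pointmass n d (fun j => Real.sqrt (∑ h, v j h ^ 2))]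
    rw [map_smul, map_smul, LinearMap.smul_apply, smul_eq_mul, smul_eq_mul]
    set ρ := ∏ j, Real.sqrt (∑ h, v j h ^ 2) ^ d j with hρdef
    have hρ : ρ * ρ = evalPoly n d (cker n d v) v := by
      rw [evalPoly_cker, ← Finset.prod_mul_distrib]
      refine Finset.prod_congr rfl fun j _ => ?_
      rw [← mul_pow]
      have h1 : Real.sqrt (∑ h, v j h ^ 2) * Real.sqrt (∑ h, v j h ^ 2)
          = ∑ h, v j h ^ 2 := Real.mul_self_sqrt (by positivity)
      rw [h1]
      congr 1
      exact Finset.sum_congr rfl fun h _ => by ring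
    calc ρ * (ρ * B (Pi.single (aStar n d) 1) (Pi.single (aStar n d) 1))
        = t * (ρ * ρ) := by
          have hbt : (B (Pi.single (aStar n d) 1)) (Pi.single (aStar n d) 1) = t := rfl
          rw [hbt]; ring
      _ = t * evalPoly n d (cker n d v) v := by rw [hρ]
  have hco : ∀ a, ((mFac n d a : ℝ)) ^ 2 * b a = t * (mFac n d a : ℝ) := by
    have hfun := eval_monomials_inj
      (fun (a : ExpVec n d) (s : (Σ j : Fin k, Fin (n j + 1))) => 2 * expFlat n d a s)
      (fun a a' hEq => expFlat_injective n d (funext fun s => by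
        have h := congrFun hEq s
        simp only at h
        omega))
      (fun a => ((mFac n d a : ℝ)) ^ 2 * b a) (fun a => t * (mFac n d a : ℝ)) ?_
    · intro a; exact congrFun hfun a
    intro y
    set v : (j : Fin k) → Fin (n j + 1) → ℝ := fun j h => y ⟨j, h⟩ with hvdef
    have hprodeq : ∀ a : ExpVec n d, (∏ j, ∏ h, v j h ^ ((a.1 j h : ℕ)))
        = ∏ s : (Σ j : Fin k, Fin (n j + 1)), y s ^ expFlat n d a s := by
      intro a
      rw [← Finset.univ_sigma_univ, Finset.prod_sigma]
      rfl
    have hsq : ∀ a : ExpVec n d,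
        (∏ s : (Σ j : Fin k, Fin (n j + 1)), y s ^ expFlat n d a s)
          * (∏ s : (Σ j : Fin k, Fin (n j + 1)), y s ^ expFlat n d a s)
        = ∏ s : (Σ j : Fin k, Fin (n j + 1)), y s ^ (2 * expFlat n d a s) := by
      intro a
      rw [← Finset.prod_mul_distrib]
      exact Finset.prod_congr rfl fun s _ => by rw [two_mul, pow_add]
    have h1 := hkey v
    rw [hBexp, evalPoly, Finset.mul_sum] at h1
    calc ∑ a, ((mFac n d a : ℝ)) ^ 2 * b a
          * ∏ s : (Σ j : Fin k, Fin (n j + 1)), y s ^ (2 * expFlat n d a s)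
        = ∑ a, cker n d v a * cker n d v a * b a := by
          refine Finset.sum_congr rfl fun a _ => ?_
          rw [cker, hprodeq a, ← hsq a]
          ring
      _ = ∑ a, t * (cker n d v a * ∏ j, ∏ h, v j h ^ ((a.1 j h : ℕ))) := h1
      _ = ∑ a, t * (mFac n d a : ℝ)
          * ∏ s : (Σ j : Fin k, Fin (n j + 1)), y s ^ (2 * expFlat n d a s) := by
          refine Finset.sum_congr rfl fun a _ => ?_
          rw [cker, hprodeq a, ← hsq a]
          ring
  have hba : ∀ a, b a = t * etaR n d a := by
    intro a
    have h := hco a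
    have hm := mFac_cast_pos n d a
    have hη := etaR_mul_mFac n d a
    have h2 : ((mFac n d a : ℝ)) ^ 2 * (t * etaR n d a) = t * (mFac n d a : ℝ) := by
      calc ((mFac n d a : ℝ)) ^ 2 * (t * etaR n d a)
          = (t * (mFac n d a : ℝ)) * (etaR n d a * (mFac n d a : ℝ)) := by ring
        _ = t * (mFac n d a : ℝ) := by rw [hη, mul_one]
    exact mul_left_cancel₀ (pow_ne_zero 2 (ne_of_gt hm)) (h.trans h2.symm)
  refine ⟨t, ht, fun c c' => ?_⟩
  rw [hBexp, innerH, Finset.mul_sum]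
  exact Finset.sum_congr rfl fun a _ => by rw [hba a]; ring

end MH
open MH in
/-- **Lemma 3.1**: the inner product `⟨f,f'⟩_i = ∑_a η(a) f_a f'_a` on `ℋ_i` is invariant
under the action of `G = O(n_1+1)×⋯×O(n_k+1)` and makes the monomials pairwise
orthogonal; moreover any `G`-invariant inner product on `ℋ_i` with respect to which the
monomials are pairwise orthogonal is a positive scalar multiple of it. -/
theorem invariant_inner_product_unique
    (k : ℕ) (hk : 0 < k) (n : Fin k → ℕ) (d : Fin k → ℕ) :
    -- invariance of `⟨·,·⟩_i` under the action of `G`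
    (∀ (O : (j : Fin k) → Matrix.orthogonalGroup (Fin (n j + 1)) ℝ)
        (c c' cO cO' : ExpVec n d → ℝ),
      IsActed n d O c cO → IsActed n d O c' cO' →
        innerH n d cO cO' = innerH n d c c') ∧
    -- the monomials are pairwise orthogonal for `⟨·,·⟩_i`
    (∀ a a' : ExpVec n d, a ≠ a' →
      innerH n d (Pi.single a 1) (Pi.single a' 1) = 0) ∧
    -- uniqueness up to a positive scalar
    (∀ B : (ExpVec n d → ℝ) →ₗ[ℝ] (ExpVec n d → ℝ) →ₗ[ℝ] ℝ,
      (∀ c c', B c c' = B c' c) →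
      (∀ c, c ≠ 0 → 0 < B c c) →
      (∀ a a' : ExpVec n d, a ≠ a' → B (Pi.single a 1) (Pi.single a' 1) = 0) →
      (∀ (O : (j : Fin k) → Matrix.orthogonalGroup (Fin (n j + 1)) ℝ)
          (c c' cO cO' : ExpVec n d → ℝ),
        IsActed n d O c cO → IsActed n d O c' cO' → B cO cO' = B c c') →
      ∃ t : ℝ, 0 < t ∧ ∀ c c', B c c' = t * innerH n d c c') := by
  refine ⟨fun O c c' cO cO' h h' => innerH_invariant n d O c c' cO cO' h h',
    fun a a' hne => innerH_single_orth n d hne,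
    fun B _hsymm hpos horth hinv => uniqueness n d B hpos horth hinv⟩
end
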